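/- (Lemma 7.) Let μ̂ be a complex-valued function on subsets of a set Ω̂, and let A, B, X, Y, P ⊆ Ω̂ with μ̂(P) ≠ 0. Suppose that μ̂(A ∩ Y ∩ P)·μ̂(B ∩ X ∩ P) = μ̂(A ∩ B ∩ X ∩ Y ∩ P)·μ̂(P), μ̂(A ∩ Y ∩ P)·μ̂(X ∩ P) = μ̂(A ∩ X ∩ Y ∩ P)·μ̂(P), μ̂(Y ∩ P)·μ̂(B ∩ X ∩ P) = μ̂(B ∩ X ∩ Y ∩ P)·μ̂(P), and μ̂(Y ∩ P)·μ̂(X ∩ P) = μ̂(X ∩ Y ∩ P)·μ̂(P). Then μ̂(A ∩ X ∩ Y ∩ P)·μ̂(B ∩ X ∩ Y ∩ P) = μ̂(A ∩ B ∩ X ∩ Y ∩ P)·μ̂(X ∩ Y ∩ P). -/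
import Mathlib

open Set

/-- Lemma 7: for a complex-valued set function `μ̂` on subsets of `Ω̂` with
`μ̂ P ≠ 0`, the four product identities imply
`μ̂(A ∩ X ∩ Y ∩ P)·μ̂(B ∩ X ∩ Y ∩ P) = μ̂(A ∩ B ∩ X ∩ Y ∩ P)·μ̂(X ∩ Y ∩ P)`. -/
theorem stmt14 {Ωh : Type*} (μh : Set Ωh → ℂ) (A B X Y P : Set Ωh)
    (hP : μh P ≠ 0)
    (h1 : μh (A ∩ Y ∩ P) * μh (B ∩ X ∩ P) = μh (A ∩ B ∩ X ∩ Y ∩ P) * μh P)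
    (h2 : μh (A ∩ Y ∩ P) * μh (X ∩ P) = μh (A ∩ X ∩ Y ∩ P) * μh P)
    (h3 : μh (Y ∩ P) * μh (B ∩ X ∩ P) = μh (B ∩ X ∩ Y ∩ P) * μh P)
    (h4 : μh (Y ∩ P) * μh (X ∩ P) = μh (X ∩ Y ∩ P) * μh P) :
    μh (A ∩ X ∩ Y ∩ P) * μh (B ∩ X ∩ Y ∩ P) =
      μh (A ∩ B ∩ X ∩ Y ∩ P) * μh (X ∩ Y ∩ P) := by
  apply mul_right_cancel₀ (mul_ne_zero hP hP)
  linear_combination (-(μh (Y ∩ P) * μh (B ∩ X ∩ P))) * h2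
    - μh (A ∩ X ∩ Y ∩ P) * μh P * h3
    + μh (Y ∩ P) * μh (X ∩ P) * h1
    + μh (A ∩ B ∩ X ∩ Y ∩ P) * μh P * h4
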